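/- Let u_1,…,u_k be unit vectors in ℝ^n and λ_i > 0 with ∑ λ_i u_i u_i^T = I_n and ∑ λ_i u_i = 0. Then for any symmetric positive definite matrix X and any c ∈ ℝ^n such that ⟨X(u_i−c), u_i−c⟩ ≤ 1 for all i, one has det(X)^{1/n} + ⟨Xc, c⟩ ≤ 1. -/

import Mathlib

open scoped RealInnerProductSpace
open Matrix

lemma trace_eq_sum_eigs {n : ℕ} {A : Matrix (Fin n) (Fin n) ℝ} (hA : A.IsHermitian) :
    A.trace = ∑ i, hA.eigenvalues i := by
  simpa using hA.trace_eq_sum_eigenvalues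

lemma det_rpow_le_trace_div {n : ℕ} (hn : 0 < n) {A : Matrix (Fin n) (Fin n) ℝ}
    (hA : A.PosDef) : A.det ^ ((1 : ℝ) / n) ≤ A.trace / n := by
  have he := hA.isHermitian
  have hpos : ∀ i, 0 < he.eigenvalues i := fun i => hA.eigenvalues_pos i
  have hdet : A.det = ∏ i, he.eigenvalues i := by simpa using he.det_eq_prod_eigenvalues
  have htr : A.trace = ∑ i, he.eigenvalues i := trace_eq_sum_eigs he
  rw [hdet, htr]
  have hnR : (0:ℝ) < n := by exact_mod_cast hn
  have h := Real.geom_mean_le_arith_mean_weighted Finset.univ (fun _ => (1:ℝ)/n)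
      he.eigenvalues (fun i _ => by positivity)
      (by simp [Finset.card_univ]; field_simp) (fun i _ => (hpos i).le)
  calc (∏ i, he.eigenvalues i) ^ ((1:ℝ)/n)
      = ∏ i, he.eigenvalues i ^ ((1:ℝ)/n) :=
        (Real.finset_prod_rpow _ _ (fun i _ => (hpos i).le) _).symm
    _ ≤ ∑ i, ((1:ℝ)/n) * he.eigenvalues i := h
    _ = (∑ i, he.eigenvalues i) / n := by rw [← Finset.mul_sum]; ring

/-- Key inequality: if the John conditions hold for unit vectors `u i` with positive weights,
then every ellipsoid `E(X,c)` containing all the `u i` satisfies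
`det(X)^(1/n) + ⟨Xc, c⟩ ≤ 1`. -/
theorem det_rpow_add_inner_le_one
    (n k : ℕ) (u : Fin k → EuclideanSpace ℝ (Fin n)) (lam : Fin k → ℝ)
    (hlam : ∀ i, 0 < lam i) (hu : ∀ i, ‖u i‖ = 1)
    (hsum : ∑ i, lam i • Matrix.vecMulVec (u i) (u i) = (1 : Matrix (Fin n) (Fin n) ℝ))
    (hcen : ∑ i, lam i • u i = 0)
    (X : Matrix (Fin n) (Fin n) ℝ) (hX : X.IsSymm) (hXpd : X.PosDef)
    (c : EuclideanSpace ℝ (Fin n))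
    (hfeas : ∀ i, ⟪Matrix.toEuclideanLin X (u i - c), u i - c⟫ ≤ 1) :
    X.det ^ ((1 : ℝ) / n) + ⟪Matrix.toEuclideanLin X c, c⟫ ≤ 1 := by
  rcases Nat.eq_zero_or_pos n with hn | hn
  · subst hn
    have hc : c = 0 := Subsingleton.elim _ _
    simp [hc, Matrix.det_fin_zero]
  have hnR : (0:ℝ) < n := by exact_mod_cast hn
  -- quadratic form in coordinates
  have hinner : ∀ v : EuclideanSpace ℝ (Fin n),
      ⟪Matrix.toEuclideanLin X v, v⟫ = ∑ a, ∑ b, X a b * v b * v a := by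
    intro v
    rw [Matrix.toEuclideanLin_apply]
    simp [PiLp.inner_apply, Matrix.mulVec, dotProduct, Finset.sum_mul]
    simp only [Finset.mul_sum]
    exact Finset.sum_congr rfl fun _ _ => Finset.sum_congr rfl fun _ _ => by ring
  -- componentwise hypotheses
  have hsum' : ∀ a b, ∑ i, lam i * (u i a * u i b) = (if a = b then (1:ℝ) else 0) := by
    intro a b
    have h := congrFun (congrFun hsum a) b
    simpa [Matrix.sum_apply, Matrix.vecMulVec_apply, Matrix.one_apply, mul_assoc] using h
  have hcen' : ∀ a, ∑ i, lam i * u i a = 0 := by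
    intro a
    have h := congrArg (fun v : EuclideanSpace ℝ (Fin n) => v a) hcen
    simp only [WithLp.ofLp_sum] at h
    rw [Finset.sum_apply] at h
    simpa [PiLp.smul_apply, smul_eq_mul] using h
  have hu' : ∀ i, ∑ a, u i a * u i a = 1 := by
    intro i
    have h : ⟪u i, u i⟫ = (1:ℝ) := by
      rw [real_inner_self_eq_norm_sq, hu i]; norm_num
    rw [PiLp.inner_apply] at h
    simpa [mul_comm, ← sq] using h
  have hS : ∑ i, lam i = (n : ℝ) := by
    have h1 : ∑ a : Fin n, ∑ i, lam i * (u i a * u i a) = (n:ℝ) := by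
      simp [hsum']
    rw [Finset.sum_comm] at h1
    have h2 : ∀ i ∈ Finset.univ, ∑ a, lam i * (u i a * u i a) = lam i := by
      intro i _; rw [← Finset.mul_sum, hu' i, mul_one]
    rwa [Finset.sum_congr rfl h2] at h1
  -- the i-sum of the expanded quadratic
  have hib : ∀ a b, ∑ i, lam i * ((u i b - c b) * (u i a - c a))
      = (if b = a then (1:ℝ) else 0) + (n:ℝ) * (c b * c a) := by
    intro a b
    have hterm : ∀ i ∈ Finset.univ, lam i * ((u i b - c b) * (u i a - c a))
        = lam i * (u i b * u i a) - c a * (lam i * u i b) - c b * (lam i * u i a)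
          + (c b * c a) * lam i := by intro i _; ring
    rw [Finset.sum_congr rfl hterm]
    rw [Finset.sum_add_distrib, Finset.sum_sub_distrib, Finset.sum_sub_distrib,
      ← Finset.mul_sum, ← Finset.mul_sum, ← Finset.mul_sum, hsum' b a, hcen' a, hcen' b, hS]
    ring
  -- key expansion
  have expand : ∑ i, lam i * ⟪Matrix.toEuclideanLin X (u i - c), u i - c⟫
      = X.trace + (n : ℝ) * ⟪Matrix.toEuclideanLin X c, c⟫ := by
    have L : ∑ i, lam i * ⟪Matrix.toEuclideanLin X (u i - c), u i - c⟫
        = ∑ a, ∑ b, X a b * ∑ i, lam i * ((u i b - c b) * (u i a - c a)) := by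
      simp only [hinner, PiLp.sub_apply]
      simp_rw [Finset.mul_sum]
      rw [Finset.sum_comm]
      refine Finset.sum_congr rfl fun a _ => ?_
      rw [Finset.sum_comm]
      refine Finset.sum_congr rfl fun b _ => ?_
      exact Finset.sum_congr rfl fun i _ => by ring
    rw [L]
    simp only [hib, mul_add]
    have h1 : ∀ a ∈ Finset.univ,
        ∑ b, ((X a b * if b = a then (1:ℝ) else 0) + X a b * ((n:ℝ) * (c b * c a)))
        = X a a + (n:ℝ) * ∑ b, X a b * c b * c a := by
      intro a _
      rw [Finset.sum_add_distrib]
      congr 1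
      · simp
      · rw [Finset.mul_sum]; exact Finset.sum_congr rfl fun b _ => by ring
    rw [Finset.sum_congr rfl h1, Finset.sum_add_distrib, ← Finset.mul_sum, hinner c]
    simp [Matrix.trace, Matrix.diag]
  -- key inequality
  have key : X.trace + (n:ℝ) * ⟪Matrix.toEuclideanLin X c, c⟫ ≤ (n:ℝ) := by
    rw [← expand, ← hS]
    refine Finset.sum_le_sum fun i _ => ?_
    calc lam i * ⟪Matrix.toEuclideanLin X (u i - c), u i - c⟫
        ≤ lam i * 1 := mul_le_mul_of_nonneg_left (hfeas i) (hlam i).le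
      _ = lam i := mul_one _
  have hd := det_rpow_le_trace_div hn hXpd
  have hfin : X.trace / n + ⟪Matrix.toEuclideanLin X c, c⟫ ≤ 1 := by
    have heq : X.trace / n + ⟪Matrix.toEuclideanLin X c, c⟫
        = (X.trace + (n:ℝ) * ⟪Matrix.toEuclideanLin X c, c⟫) / n := by
      field_simp
    rw [heq]
    exact (div_le_one hnR).mpr key
  linarith
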